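/- Let X be a TVS with topological dual X' carrying the weak-* topology, C a closed convex cone with vertex 0 and v ∈ int(C). Then the set Δ := {p ∈ X' : p(c) ≤ 0 ∀ c ∈ C, p(v) = -1} is weak-* compact. -/

import Mathlib

open Set Filter Topology Pointwise

/-- Pointwise absorption: since `v ∈ interior C`, for any `x` there is `ε > 0` with
`v + ε • x ∈ C` and `v - ε • x ∈ C`. -/
lemma stmt_8_aux {X : Type*} [AddCommGroup X] [Module ℝ X] [TopologicalSpace X]
    [IsTopologicalAddGroup X] [ContinuousSMul ℝ X]
    {C : Set X} {v : X} (hv : v ∈ interior C) (x : X) :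
    ∃ ε : ℝ, 0 < ε ∧ v + ε • x ∈ C ∧ v - ε • x ∈ C := by
  have hnhds : interior C ∈ 𝓝 v := (isOpen_interior).mem_nhds hv
  have h1 : Filter.Tendsto (fun t : ℝ => v + t • x) (𝓝 0) (𝓝 v) := by
    have : Continuous (fun t : ℝ => v + t • x) :=
      continuous_const.add (continuous_id.smul continuous_const)
    simpa using this.tendsto 0
  have h2 : Filter.Tendsto (fun t : ℝ => v - t • x) (𝓝 0) (𝓝 v) := by
    have : Continuous (fun t : ℝ => v - t • x) :=
      continuous_const.sub (continuous_id.smul continuous_const)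
    simpa using this.tendsto 0
  have hev : ∀ᶠ t : ℝ in 𝓝 0, v + t • x ∈ interior C ∧ v - t • x ∈ interior C :=
    (h1.eventually hnhds).and (h2.eventually hnhds)
  rcases Metric.eventually_nhds_iff.1 hev with ⟨δ, hδ, h⟩
  refine ⟨δ / 2, by linarith, ?_, ?_⟩
  · exact interior_subset (h (by rw [Real.dist_eq, sub_zero, abs_of_pos (by linarith)]; linarith)).1
  · exact interior_subset (h (by rw [Real.dist_eq, sub_zero, abs_of_pos (by linarith)]; linarith)).2

theorem stmt_8 {X : Type*} [AddCommGroup X] [Module ℝ X] [TopologicalSpace X]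
    [IsTopologicalAddGroup X] [ContinuousSMul ℝ X]
    (C : Set X) (hC : Convex ℝ C) (hCcl : IsClosed C)
    (hcone : ∀ t : ℝ, 0 ≤ t → ∀ c ∈ C, t • c ∈ C) (h0 : (0 : X) ∈ C)
    (v : X) (hv : v ∈ interior C) :
    IsCompact {p : WeakDual ℝ X | (∀ c ∈ C, p c ≤ 0) ∧ p v = -1} := by
  classical
  set Δ : Set (WeakDual ℝ X) := {p : WeakDual ℝ X | (∀ c ∈ C, p c ≤ 0) ∧ p v = -1} with hΔ
  -- pointwise bounds
  set r : X → ℝ := fun x => (Classical.choose (stmt_8_aux hv x))⁻¹ with hr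
  have hrspec : ∀ x : X, 0 < Classical.choose (stmt_8_aux hv x) ∧
      v + Classical.choose (stmt_8_aux hv x) • x ∈ C ∧
      v - Classical.choose (stmt_8_aux hv x) • x ∈ C :=
    fun x => Classical.choose_spec (stmt_8_aux hv x)
  have hbound : ∀ g : X → ℝ, (∀ x y : X, g (x + y) = g x + g y) →
      (∀ (t : ℝ) (x : X), g (t • x) = t * g x) →
      (∀ c ∈ C, g c ≤ 0) → g v = -1 → ∀ x : X, g x ∈ Icc (-(r x)) (r x) := by
    intro g hadd hsmul hC0 hgv x
    obtain ⟨hε, hp, hm⟩ := hrspec x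
    set ε := Classical.choose (stmt_8_aux hv x)
    have h1 : g v + ε * g x ≤ 0 := by
      have := hC0 _ hp
      rwa [hadd, hsmul] at this
    have h2 : g v - ε * g x ≤ 0 := by
      have := hC0 _ hm
      rw [sub_eq_add_neg, hadd] at this
      have hneg : g (-(ε • x)) = -(ε * g x) := by
        have := hsmul (-1 : ℝ) (ε • x)
        simpa [hsmul] using this
      rw [hneg] at this
      linarith
    rw [hgv] at h1 h2
    have hεinv : (0:ℝ) < ε⁻¹ := inv_pos.2 hε
    have hkey : ε⁻¹ * ε = 1 := inv_mul_cancel₀ (ne_of_gt hε)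
    have hlow : -(1 : ℝ) ≤ ε * g x := by linarith
    have hhigh : ε * g x ≤ 1 := by linarith
    have hlow' := mul_le_mul_of_nonneg_left hlow (le_of_lt hεinv)
    have hhigh' := mul_le_mul_of_nonneg_left hhigh (le_of_lt hεinv)
    rw [← mul_assoc, hkey, one_mul] at hlow' hhigh'
    simp only [hr]
    constructor
    · nlinarith
    · nlinarith
  -- the image of Δ in the product space
  set S : Set (X → ℝ) := {g : X → ℝ | (∀ x y : X, g (x + y) = g x + g y) ∧
      (∀ (t : ℝ) (x : X), g (t • x) = t * g x) ∧ (∀ c ∈ C, g c ≤ 0) ∧ g v = -1} with hS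
  have hclosed : IsClosed S := by
    have e : S = (⋂ x : X, ⋂ y : X, {g : X → ℝ | g (x + y) = g x + g y}) ∩
        ((⋂ t : ℝ, ⋂ x : X, {g : X → ℝ | g (t • x) = t * g x}) ∩
        ((⋂ c ∈ C, {g : X → ℝ | g c ≤ 0}) ∩ {g : X → ℝ | g v = -1})) := by
      ext g
      simp only [hS, Set.mem_inter_iff, Set.mem_iInter, Set.mem_setOf_eq]
    rw [e]
    refine IsClosed.inter ?_ (IsClosed.inter ?_ (IsClosed.inter ?_ ?_))
    · exact isClosed_iInter fun x => isClosed_iInter fun y =>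
        isClosed_eq (continuous_apply (x + y)) ((continuous_apply x).add (continuous_apply y))
    · exact isClosed_iInter fun t => isClosed_iInter fun x =>
        isClosed_eq (continuous_apply (t • x)) (continuous_const.mul (continuous_apply x))
    · exact isClosed_iInter fun c => isClosed_iInter fun _ =>
        isClosed_le (continuous_apply _) continuous_const
    · exact isClosed_eq (continuous_apply _) continuous_const
  have hsub : S ⊆ Set.pi Set.univ (fun x => Icc (-(r x)) (r x)) := by
    intro g hg _ _
    exact hbound g hg.1 hg.2.1 hg.2.2.1 hg.2.2.2 _
  have hKcomp : IsCompact (Set.pi Set.univ (fun x : X => Icc (-(r x)) (r x))) :=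
    isCompact_univ_pi fun x => isCompact_Icc
  have hScomp : IsCompact S := hKcomp.of_isClosed_subset hclosed hsub
  -- Δ is the preimage of S under the embedding into the product space
  have hemb : Topology.IsEmbedding ((↑) : WeakDual ℝ X → (X → ℝ)) :=
    DFunLike.coe_injective.isEmbedding_induced
  have himage : ((↑) : WeakDual ℝ X → (X → ℝ)) '' Δ = S := by
    apply Set.Subset.antisymm
    · rintro _ ⟨p, hp, rfl⟩
      exact ⟨fun x y => map_add p x y, fun t x => map_smul p t x, hp.1, hp.2⟩
    · intro g hg
      obtain ⟨hadd, hsmul, hC0, hgv⟩ := hg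
      -- `g` is linear
      set l : X →ₗ[ℝ] ℝ :=
        { toFun := g, map_add' := hadd, map_smul' := fun t x => hsmul t x } with hl
      -- `g` is bounded on a neighborhood of 0, hence continuous
      have hW : {u : X | v + u ∈ interior C ∧ v - u ∈ interior C} ∈ 𝓝 (0 : X) := by
        have h1 : IsOpen {u : X | v + u ∈ interior C} :=
          isOpen_interior.preimage (continuous_const.add continuous_id)
        have h2 : IsOpen {u : X | v - u ∈ interior C} :=
          isOpen_interior.preimage (continuous_const.sub continuous_id)
        exact (h1.inter h2).mem_nhds (by simpa using hv)
      have hWbound : ∀ u ∈ {u : X | v + u ∈ interior C ∧ v - u ∈ interior C}, |g u| ≤ 1 := by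
        intro u hu
        have h1 : g v + g u ≤ 0 := by
          have := hC0 _ (interior_subset hu.1); rwa [hadd] at this
        have h2 : g v - g u ≤ 0 := by
          have := hC0 _ (interior_subset hu.2)
          rw [sub_eq_add_neg, hadd] at this
          have hneg : g (-u) = -(g u) := by
            have := hsmul (-1 : ℝ) u; simpa using this
          rw [hneg] at this; linarith
        rw [hgv] at h1 h2
        rw [abs_le]; constructor <;> linarith
      have hcont : Continuous g := by
        have hcat : ContinuousAt g 0 := by
          have hg0 : g 0 = 0 := by
            have := hsmul 0 0; simpa using this
          rw [ContinuousAt, hg0]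
          rw [Metric.tendsto_nhds]
          intro ε hε
          set W := {u : X | v + u ∈ interior C ∧ v - u ∈ interior C}
          have hε2 : (0:ℝ) < ε / 2 := by linarith
          have hεW : (ε / 2) • W ∈ 𝓝 (0 : X) :=
            (set_smul_mem_nhds_zero_iff (ne_of_gt hε2)).2 hW
          filter_upwards [hεW] with u hu
          obtain ⟨w, hw, rfl⟩ := hu
          have hb : |g ((ε / 2) • w)| ≤ ε / 2 := by
            rw [hsmul, abs_mul, abs_of_pos hε2]
            calc ε / 2 * |g w| ≤ ε / 2 * 1 :=
                  mul_le_mul_of_nonneg_left (hWbound w hw) (le_of_lt hε2)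
              _ = ε / 2 := by ring
          have : dist (g ((ε / 2) • w)) 0 = |g ((ε / 2) • w)| := by simp [Real.dist_eq]
          rw [this]
          linarith
        exact continuous_of_continuousAt_zero l.toAddMonoidHom hcat
      refine ⟨⟨l, hcont⟩, ⟨hC0, hgv⟩, rfl⟩
  rw [hemb.isCompact_iff, himage]
  exact hScomp
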